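/- Let k ∈ {1,…,n}, Q_0 = [0,1]^n and τ ∈ (0,1). Let (m_j)_{j≥1} be positive integers with m_j ≥ 2^j and m_j dividing m_{j+1} for every j, and let (f_j)_{j≥0} be C² functions on Q_0 such that for every j ≥ 1 and every Q ∈ 𝒬(m_j): (i) | ∫_Q ( C_k(∇²f_j(x)) − C_k(∇²f_{j−1}(x)) ) dx | ≤ τ^j |Q|; and (ii) |C_k(∇²f_{j−1}(y)) − C_k(∇²f_{j−1}(x))| ≤ τ^j for all x, y ∈ Q. Assume moreover that C_k(∇²f_j(x)) → 0 as j → ∞ for almost every x ∈ Q_0. Then the weak-* limit measure μ of the measures C_k(∇²f_j) dx (which exists by (i)) is singular with respect to Lebesgue measure on Q_0. -/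

import Mathlib

open MeasureTheory Filter Topology Metric Set
open scoped RealInnerProductSpace ENNReal

noncomputable section

/-- Euclidean `n`-space. -/
abbrev Euc (n : ℕ) := EuclideanSpace ℝ (Fin n)

/-- Operator (spectral) norm of an `n × n` real matrix, i.e. the norm of the induced
linear map on Euclidean space. -/
def matOpNorm {n : ℕ} (A : Matrix (Fin n) (Fin n) ℝ) : ℝ :=
  ‖LinearMap.toContinuousLinearMap (Matrix.toEuclideanLin A)‖

/-- The singular values of a real square matrix: the eigenvalues of `√(Aᵀ A)`
(equivalently, the square roots of the eigenvalues of `Aᵀ A = Aᴴ A`), in some order. -/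
def singularValues {n : ℕ} (A : Matrix (Fin n) (Fin n) ℝ) : Fin n → ℝ :=
  fun i => Real.sqrt ((by simpa using Matrix.isHermitian_conjTranspose_mul_self A : (Matrix.transpose A * A).IsHermitian).eigenvalues i)

/-- `k`-th elementary symmetric function of `n` numbers. -/
def Sk {n : ℕ} (k : ℕ) (μ : Fin n → ℝ) : ℝ :=
  ∑ s ∈ Finset.powersetCard k Finset.univ, ∏ i ∈ s, μ i

/-- `C_k(A)`: the `k`-th elementary symmetric function of the singular values of `A`. -/
def Ck {n : ℕ} (k : ℕ) (A : Matrix (Fin n) (Fin n) ℝ) : ℝ :=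
  Sk k (singularValues A)

/-- The Hessian matrix of a function `g : ℝⁿ → ℝ` at `x`. -/
def hess {n : ℕ} (g : Euc n → ℝ) (x : Euc n) : Matrix (Fin n) (Fin n) ℝ :=
  Matrix.of fun i j =>
    fderiv ℝ (fun y => fderiv ℝ g y (EuclideanSpace.single j 1)) x (EuclideanSpace.single i 1)

/-- The Jacobian matrix of a map `h : ℝⁿ → ℝⁿ` at `x`. -/
def jac {n : ℕ} (h : Euc n → Euc n) (x : Euc n) : Matrix (Fin n) (Fin n) ℝ :=
  Matrix.of fun i j => fderiv ℝ h x (EuclideanSpace.single j 1) i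

/-- The closed cube with "lower--left" corner `a` and side length `r`. -/
def cube {n : ℕ} (a : Euc n) (r : ℝ) : Set (Euc n) := {x | ∀ i, x i ∈ Icc (a i) (a i + r)}

/-- The open unit cube `(0,1)ⁿ`. -/
def openUnitCube (n : ℕ) : Set (Euc n) := {x | ∀ i, x i ∈ Ioo (0:ℝ) 1}

/-- The closed unit cube `Q₀ = [0,1]ⁿ`. -/
def closedUnitCube (n : ℕ) : Set (Euc n) := {x | ∀ i, x i ∈ Icc (0:ℝ) 1}

/-- The closed subcube of side `1/m` of `[0,1]ⁿ` indexed by `z ∈ {0,…,m-1}ⁿ`;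
these cubes form the partition `𝒬(m)`. -/
def gridCube {n : ℕ} (m : ℕ) (z : Fin n → ℕ) : Set (Euc n) :=
  {x | ∀ i, x i ∈ Icc ((z i : ℝ) / m) (((z i : ℝ) + 1) / m)}

/-- `p` as an extended nonnegative real exponent. -/
def pExp (p : ℝ) : ℝ≥0∞ := ENNReal.ofReal p

/-- The conjugate exponent `p'` of `p ∈ [1, ∞)`, as an extended nonnegative real. -/
def dualExp (p : ℝ) : ℝ≥0∞ := if p = 1 then ⊤ else ENNReal.ofReal (p / (p - 1))

/-- Test functions on `Ω`: smooth compactly supported functions with support inside `Ω`. -/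
def IsTestFun {n : ℕ} (Ω : Set (Euc n)) (φ : Euc n → ℝ) : Prop :=
  ContDiff ℝ (⊤ : ℕ∞) φ ∧ HasCompactSupport φ ∧ tsupport φ ⊆ Ω

/-- `v` is the `i`-th weak (distributional) partial derivative of `u` on `Ω`. -/
def HasWeakPDeriv {n : ℕ} (Ω : Set (Euc n)) (i : Fin n) (u v : Euc n → ℝ) : Prop :=
  ∀ φ : Euc n → ℝ, IsTestFun Ω φ →
    ∫ x in Ω, u x * fderiv ℝ φ x (EuclideanSpace.single i 1) = - ∫ x in Ω, v x * φ x

/-- `u ∈ W^{2,p}(Ω)`, with weak gradient `Du` and weak Hessian `D2u`. -/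
def MemW2p {n : ℕ} (Ω : Set (Euc n)) (p : ℝ) (u : Euc n → ℝ)
    (Du : Euc n → Fin n → ℝ) (D2u : Euc n → Matrix (Fin n) (Fin n) ℝ) : Prop :=
  MemLp u (pExp p) (volume.restrict Ω) ∧
  (∀ i, MemLp (fun x => Du x i) (pExp p) (volume.restrict Ω)) ∧
  (∀ i j, MemLp (fun x => D2u x i j) (pExp p) (volume.restrict Ω)) ∧
  (∀ i, HasWeakPDeriv Ω i u (fun x => Du x i)) ∧
  (∀ i j, HasWeakPDeriv Ω j (fun x => Du x i) (fun x => D2u x i j))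

/-- The `W^{2,p}(Ω)`-norm of `u` (expressed through its weak gradient and Hessian). -/
def W2pNorm {n : ℕ} (Ω : Set (Euc n)) (p : ℝ) (u : Euc n → ℝ)
    (Du : Euc n → Fin n → ℝ) (D2u : Euc n → Matrix (Fin n) (Fin n) ℝ) : ℝ :=
  (eLpNorm u (pExp p) (volume.restrict Ω)).toReal +
  (∑ i, (eLpNorm (fun x => Du x i) (pExp p) (volume.restrict Ω)).toReal) +
  (∑ i, ∑ j, (eLpNorm (fun x => D2u x i j) (pExp p) (volume.restrict Ω)).toReal)

/-- Weak convergence `u_j ⇀ v` in `W^{2,p}(Ω)`: boundedness in norm together with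
convergence of `u_j`, `Du_j`, `D²u_j` tested against arbitrary `L^{p'}` functions. -/
def WeakW2pTendsto {n : ℕ} (Ω : Set (Euc n)) (p : ℝ)
    (u : ℕ → Euc n → ℝ) (Du : ℕ → Euc n → Fin n → ℝ)
    (D2u : ℕ → Euc n → Matrix (Fin n) (Fin n) ℝ)
    (v : Euc n → ℝ) (Dv : Euc n → Fin n → ℝ)
    (D2v : Euc n → Matrix (Fin n) (Fin n) ℝ) : Prop :=
  (∃ M : ℝ, ∀ j, W2pNorm Ω p (u j) (Du j) (D2u j) ≤ M) ∧
  (∀ g : Euc n → ℝ, MemLp g (dualExp p) (volume.restrict Ω) →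
    Tendsto (fun j => ∫ x in Ω, u j x * g x) atTop (𝓝 (∫ x in Ω, v x * g x)) ∧
    (∀ i, Tendsto (fun j => ∫ x in Ω, Du j x i * g x) atTop
      (𝓝 (∫ x in Ω, Dv x i * g x))) ∧
    (∀ i l, Tendsto (fun j => ∫ x in Ω, D2u j x i l * g x) atTop
      (𝓝 (∫ x in Ω, D2v x i l * g x))))

/-- `u ∈ W^{1,p}(Ω, ℝⁿ)`, with weak Jacobian matrix `Du`. -/
def MemW1pMap {n : ℕ} (Ω : Set (Euc n)) (p : ℝ) (u : Euc n → Euc n)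
    (Du : Euc n → Matrix (Fin n) (Fin n) ℝ) : Prop :=
  (∀ i, MemLp (fun x => u x i) (pExp p) (volume.restrict Ω)) ∧
  (∀ i j, MemLp (fun x => Du x i j) (pExp p) (volume.restrict Ω)) ∧
  (∀ i j, HasWeakPDeriv Ω j (fun x => u x i) (fun x => Du x i j))

/-- The `W^{1,p}(Ω,ℝⁿ)`-norm of a map `u` with weak Jacobian `Du`. -/
def W1pNorm {n : ℕ} (Ω : Set (Euc n)) (p : ℝ) (u : Euc n → Euc n)
    (Du : Euc n → Matrix (Fin n) (Fin n) ℝ) : ℝ :=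
  (∑ i, (eLpNorm (fun x => u x i) (pExp p) (volume.restrict Ω)).toReal) +
  (∑ i, ∑ j, (eLpNorm (fun x => Du x i j) (pExp p) (volume.restrict Ω)).toReal)

/-- Weak convergence `u_j ⇀ v` in `W^{1,p}(Ω,ℝⁿ)`. -/
def WeakW1pTendsto {n : ℕ} (Ω : Set (Euc n)) (p : ℝ)
    (u : ℕ → Euc n → Euc n) (Du : ℕ → Euc n → Matrix (Fin n) (Fin n) ℝ)
    (v : Euc n → Euc n) (Dv : Euc n → Matrix (Fin n) (Fin n) ℝ) : Prop :=
  (∃ M : ℝ, ∀ j, W1pNorm Ω p (u j) (Du j) ≤ M) ∧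
  (∀ g : Euc n → ℝ, MemLp g (dualExp p) (volume.restrict Ω) →
    (∀ i, Tendsto (fun j => ∫ x in Ω, u j x i * g x) atTop
      (𝓝 (∫ x in Ω, v x i * g x))) ∧
    (∀ i l, Tendsto (fun j => ∫ x in Ω, Du j x i l * g x) atTop
      (𝓝 (∫ x in Ω, Dv x i l * g x))))

/-- `Ω` is a bounded open set with Lipschitz boundary: near every boundary point,
after choosing a unit direction `v`, the set `Ω` is the open region above the graph of a
Lipschitz function on the hyperplane orthogonal to `v`. -/
def IsLipschitzDomain {n : ℕ} (Ω : Set (Euc n)) : Prop :=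
  IsOpen Ω ∧ Bornology.IsBounded Ω ∧
  ∀ x ∈ frontier Ω, ∃ v : Euc n, ‖v‖ = 1 ∧ ∃ r > (0:ℝ), ∃ L : NNReal, ∃ φ : Euc n → ℝ,
    LipschitzWith L φ ∧
    ∀ y ∈ Metric.ball x r, (y ∈ Ω ↔ φ (y - (inner ℝ y v : ℝ) • v) < (inner ℝ y v : ℝ))

/-- The `α`-Hölder seminorm of `G` on the set `S`. -/
def holderSemi {n : ℕ} {F : Type*} [NormedAddCommGroup F] (α : ℝ) (S : Set (Euc n))
    (G : Euc n → F) : ℝ :=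
  sSup {c | ∃ x ∈ S, ∃ y ∈ S, x ≠ y ∧ c = ‖G y - G x‖ / dist y x ^ α}

/-- The sup-norm of `f` on the set `S`. -/
def supNorm {n : ℕ} {F : Type*} [NormedAddCommGroup F] (S : Set (Euc n)) (f : Euc n → F) : ℝ :=
  sSup ((fun x => ‖f x‖) '' S)

/-- The `C^{1,α}(S)` norm of a function `u` whose (extended) derivative is `G`. -/
def C1AlphaNorm {n : ℕ} (α : ℝ) (S : Set (Euc n)) (u : Euc n → ℝ)
    (G : Euc n → Euc n →L[ℝ] ℝ) : ℝ :=
  supNorm S u + supNorm S G + holderSemi α S G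

/-- The `C^{0,α}(S)` norm of a map `u`. -/
def C0AlphaNorm {n : ℕ} {F : Type*} [NormedAddCommGroup F] (α : ℝ) (S : Set (Euc n))
    (u : Euc n → F) : ℝ :=
  supNorm S u + holderSemi α S u

/-- `u` belongs to the little Hölder space `c^{1,α}` on `S = closure U`: `u` is differentiable
on the open set `U` with derivative `G`, `u` and `G` extend continuously to `S`, and the
`α`-Hölder modulus of continuity `ω(G, r^α)` of `G` tends to `0` as `r → 0`. -/
def MemLittleHolderC1 {n : ℕ} (α : ℝ) (U S : Set (Euc n)) (u : Euc n → ℝ)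
    (G : Euc n → Euc n →L[ℝ] ℝ) : Prop :=
  (∀ x ∈ U, HasFDerivAt u (G x) x) ∧
  ContinuousOn u S ∧ ContinuousOn G S ∧
  (∀ ε > (0:ℝ), ∃ δ > (0:ℝ), ∀ x ∈ S, ∀ y ∈ S, dist y x < δ →
    ‖G y - G x‖ ≤ ε * dist y x ^ α)

/-- `u` belongs to the little Hölder space `c^{0,α}(S)`. -/
def MemLittleHolderC0 {n : ℕ} {F : Type*} [NormedAddCommGroup F] (α : ℝ) (S : Set (Euc n))
    (u : Euc n → F) : Prop :=
  ContinuousOn u S ∧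
  (∀ ε > (0:ℝ), ∃ δ > (0:ℝ), ∀ x ∈ S, ∀ y ∈ S, dist y x < δ →
    ‖u y - u x‖ ≤ ε * dist y x ^ α)

/-- The modulus of continuity `ω(G, t) = sup {‖G y - G x‖ : x, y ∈ S, |y - x| ≤ t}`. -/
def modCont {n : ℕ} {F : Type*} [NormedAddCommGroup F] (S : Set (Euc n)) (G : Euc n → F)
    (t : ℝ) : ℝ :=
  sSup {c | ∃ x ∈ S, ∃ y ∈ S, dist y x ≤ t ∧ c = ‖G y - G x‖}

-- ===================== auxiliary machinery =====================

namespace CkAux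
open Matrix Polynomial

variable {n : ℕ}

lemma isHermitian_transpose_mul_self (A : Matrix (Fin n) (Fin n) ℝ) : (Aᵀ * A).IsHermitian := by
  simpa using Matrix.isHermitian_conjTranspose_mul_self A

lemma Sk_eq_esymm (k : ℕ) (μ : Fin n → ℝ) :
    Sk k μ = (Multiset.map μ Finset.univ.val).esymm k := by
  rw [Finset.esymm_map_val]; rfl

lemma continuous_F (k : ℕ) :
    Continuous fun μ : Fin n → ℝ => Sk k fun i => Real.sqrt (μ i) := by
  unfold Sk
  exact continuous_finset_sum _ fun s _ => continuous_finset_prod _ fun i _ =>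
    Real.continuous_sqrt.comp (continuous_apply i)

lemma spectral_real {B : Matrix (Fin n) (Fin n) ℝ} (hB : B.IsHermitian) :
    B = (hB.eigenvectorUnitary : Matrix (Fin n) (Fin n) ℝ) * Matrix.diagonal hB.eigenvalues
      * star (hB.eigenvectorUnitary : Matrix (Fin n) (Fin n) ℝ) := by
  have h := hB.spectral_theorem
  rwa [RCLike.ofReal_real_eq_id, Function.id_comp] at h

lemma charmatrix_conj (U B : Matrix (Fin n) (Fin n) ℝ) (h2 : U * star U = 1) :
    charmatrix (U * B * star U) =
      (C : ℝ →+* ℝ[X]).mapMatrix U * charmatrix B * (C : ℝ →+* ℝ[X]).mapMatrix (star U) := by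
  have hmm : ∀ M N : Matrix (Fin n) (Fin n) ℝ,
      (C : ℝ →+* ℝ[X]).mapMatrix (M * N)
        = (C : ℝ →+* ℝ[X]).mapMatrix M * (C : ℝ →+* ℝ[X]).mapMatrix N :=
    fun M N => _root_.map_mul _ M N
  have h1' : (C : ℝ →+* ℝ[X]).mapMatrix U * (C : ℝ →+* ℝ[X]).mapMatrix (star U) = 1 := by
    rw [← hmm, h2]; exact _root_.map_one _
  have hcomm : Matrix.scalar (Fin n) (X : ℝ[X]) * (C : ℝ →+* ℝ[X]).mapMatrix U
      = (C : ℝ →+* ℝ[X]).mapMatrix U * Matrix.scalar (Fin n) (X : ℝ[X]) :=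
    (Matrix.scalar_commute (X : ℝ[X]) (fun r => Commute.all _ _) _).eq
  have hs : (C : ℝ →+* ℝ[X]).mapMatrix U * Matrix.scalar (Fin n) (X : ℝ[X])
        * (C : ℝ →+* ℝ[X]).mapMatrix (star U)
      = Matrix.scalar (Fin n) (X : ℝ[X]) := by
    rw [← hcomm, mul_assoc, h1', mul_one]
  unfold charmatrix
  rw [hmm, hmm, Matrix.mul_sub, Matrix.sub_mul, hs]

lemma charpoly_conj (U B : Matrix (Fin n) (Fin n) ℝ) (h2 : U * star U = 1) :
    (U * B * star U).charpoly = B.charpoly := by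
  have hmm : ∀ M N : Matrix (Fin n) (Fin n) ℝ,
      (C : ℝ →+* ℝ[X]).mapMatrix (M * N)
        = (C : ℝ →+* ℝ[X]).mapMatrix M * (C : ℝ →+* ℝ[X]).mapMatrix N :=
    fun M N => _root_.map_mul _ M N
  have h1' : (C : ℝ →+* ℝ[X]).mapMatrix U * (C : ℝ →+* ℝ[X]).mapMatrix (star U) = 1 := by
    rw [← hmm, h2]; exact _root_.map_one _
  have hdet : ((C : ℝ →+* ℝ[X]).mapMatrix U).det * ((C : ℝ →+* ℝ[X]).mapMatrix (star U)).det = 1 := by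
    rw [← det_mul, h1', det_one]
  unfold Matrix.charpoly
  rw [charmatrix_conj U B h2, det_mul, det_mul]
  calc ((C : ℝ →+* ℝ[X]).mapMatrix U).det * (charmatrix B).det
        * ((C : ℝ →+* ℝ[X]).mapMatrix (star U)).det
      = ((C : ℝ →+* ℝ[X]).mapMatrix U).det * ((C : ℝ →+* ℝ[X]).mapMatrix (star U)).det
        * (charmatrix B).det := by ring
    _ = (charmatrix B).det := by rw [hdet, one_mul]

lemma charpoly_diagonal (d : Fin n → ℝ) :
    (Matrix.diagonal d).charpoly = ∏ i, (X - C (d i)) := by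
  rw [Matrix.charpoly_of_upperTriangular _ (Matrix.blockTriangular_diagonal d)]
  congr 1
  ext i
  rw [Matrix.diagonal_apply_eq]

lemma multiset_eigen {B : Matrix (Fin n) (Fin n) ℝ} (hB : B.IsHermitian)
    (U : Matrix (Fin n) (Fin n) ℝ) (ρ : Fin n → ℝ) (h2 : U * star U = 1)
    (hspec : B = U * Matrix.diagonal ρ * star U) :
    Multiset.map hB.eigenvalues Finset.univ.val = Multiset.map ρ Finset.univ.val := by
  have hV2 : (hB.eigenvectorUnitary : Matrix (Fin n) (Fin n) ℝ)
      * star (hB.eigenvectorUnitary : Matrix (Fin n) (Fin n) ℝ) = 1 :=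
    (Matrix.mem_unitaryGroup_iff).mp (Matrix.IsHermitian.eigenvectorUnitary hB).2
  have e1 : B.charpoly = ∏ i, (X - C (hB.eigenvalues i)) := by
    conv_lhs => rw [spectral_real hB]
    rw [charpoly_conj _ _ hV2, charpoly_diagonal]
  have e2 : B.charpoly = ∏ i, (X - C (ρ i)) := by
    conv_lhs => rw [hspec]
    rw [charpoly_conj _ _ h2, charpoly_diagonal]
  have key : (Multiset.map (fun a => X - C a) (Multiset.map hB.eigenvalues Finset.univ.val)).prod
      = (Multiset.map (fun a => X - C a) (Multiset.map ρ Finset.univ.val)).prod := by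
    rw [Multiset.map_map, Multiset.map_map]
    rw [← Finset.prod_eq_multiset_prod, ← Finset.prod_eq_multiset_prod]
    exact (e1.symm.trans e2 : _)
  have := congrArg Polynomial.roots key
  rwa [Polynomial.roots_multiset_prod_X_sub_C, Polynomial.roots_multiset_prod_X_sub_C] at this

lemma sum_sq_eigenvalues {B : Matrix (Fin n) (Fin n) ℝ} (hB : B.IsHermitian) :
    ∑ i, hB.eigenvalues i ^ 2 = (B * B).trace := by
  set V := (hB.eigenvectorUnitary : Matrix (Fin n) (Fin n) ℝ) with hV
  set D := Matrix.diagonal hB.eigenvalues with hD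
  have h2 : V * star V = 1 := (Matrix.mem_unitaryGroup_iff).mp (Matrix.IsHermitian.eigenvectorUnitary hB).2
  have h1 : star V * V = 1 := (Matrix.mem_unitaryGroup_iff').mp (Matrix.IsHermitian.eigenvectorUnitary hB).2
  have hBB : B * B = V * (D * D) * star V := by
    conv_lhs => rw [spectral_real hB]
    have haux : star V * (V * (D * star V)) = D * star V := by rw [← mul_assoc, h1, one_mul]
    simp only [← hV, ← hD, mul_assoc]
    rw [haux]
  rw [hBB, Matrix.trace_mul_cycle, ← mul_assoc, h1, one_mul, Matrix.diagonal_mul_diagonal,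
    Matrix.trace_diagonal]
  simp [pow_two]

lemma continuous_Ck (k : ℕ) : Continuous fun A : Matrix (Fin n) (Fin n) ℝ => Ck k A := by
  have cof : Continuous (fun w : Fin n → Fin n → ℝ => (Matrix.of w : Matrix (Fin n) (Fin n) ℝ)) :=
    continuous_matrix fun i j => (continuous_apply j).comp (continuous_apply i)
  have key : Continuous fun w : Fin n → Fin n → ℝ => Ck k (Matrix.of w) := by
    rw [continuous_iff_seqContinuous]
    intro ws w₀ hw
    set A : ℕ → Matrix (Fin n) (Fin n) ℝ := fun m => Matrix.of (ws m) with hAdef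
    set A₀ : Matrix (Fin n) (Fin n) ℝ := Matrix.of w₀ with hA₀def
    have hA : Tendsto A atTop (𝓝 A₀) := (cof.tendsto w₀).comp hw
    show Tendsto (fun m => Ck k (A m)) atTop (𝓝 (Ck k A₀))
    apply Filter.tendsto_of_subseq_tendsto
    intro ns hns
    -- the sequence of Gram matrices
    set B : ℕ → Matrix (Fin n) (Fin n) ℝ := fun m => (A (ns m))ᴴ * (A (ns m)) with hBdef
    have hAc : Tendsto (fun m => A (ns m)) atTop (𝓝 A₀) := hA.comp hns
    have contB : Continuous fun M : Matrix (Fin n) (Fin n) ℝ => Mᴴ * M :=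
      (continuous_id.matrix_conjTranspose).matrix_mul continuous_id
    have hBlim : Tendsto B atTop (𝓝 (A₀ᴴ * A₀)) := (contB.tendsto A₀).comp hAc
    set lam : ℕ → (Fin n → ℝ) :=
      fun m => (CkAux.isHermitian_transpose_mul_self (A (ns m))).eigenvalues with hlamdef
    set V : ℕ → Matrix (Fin n) (Fin n) ℝ :=
      fun m => ((CkAux.isHermitian_transpose_mul_self (A (ns m))).eigenvectorUnitary :
        Matrix (Fin n) (Fin n) ℝ) with hVdef
    have hspec : ∀ m, B m = V m * Matrix.diagonal (lam m) * star (V m) :=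
      fun m => spectral_real _
    have hV2 : ∀ m, V m * star (V m) = 1 := fun m =>
      (Matrix.mem_unitaryGroup_iff).mp (Matrix.IsHermitian.eigenvectorUnitary _).2
    have hV1 : ∀ m, star (V m) * V m = 1 := fun m =>
      (Matrix.mem_unitaryGroup_iff').mp (Matrix.IsHermitian.eigenvectorUnitary _).2
    -- trace bound
    have htr : Tendsto (fun m => (B m * B m).trace) atTop (𝓝 (((A₀ᴴ * A₀) * (A₀ᴴ * A₀)).trace)) := by
      have : Continuous fun M : Matrix (Fin n) (Fin n) ℝ => ((Mᴴ * M) * (Mᴴ * M)).trace :=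
        (contB.matrix_mul contB).matrix_trace
      exact (this.tendsto A₀).comp hAc
    obtain ⟨R, hR⟩ : ∃ R, ∀ m, (B m * B m).trace ≤ R := by
      obtain ⟨R, hR⟩ := htr.bddAbove_range
      exact ⟨R, fun m => hR ⟨m, rfl⟩⟩
    have hlam_bdd : ∀ m, lam m ∈ closedBall (0 : Fin n → ℝ) (Real.sqrt R) := by
      intro m
      rw [mem_closedBall_zero_iff]
      refine (pi_norm_le_iff_of_nonneg (Real.sqrt_nonneg R)).2 fun i => ?_
      have h1 : (lam m i) ^ 2 ≤ (B m * B m).trace := by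
        have hle : lam m i ^ 2 ≤ ∑ j, lam m j ^ 2 :=
          Finset.single_le_sum (f := fun j => lam m j ^ 2)
            (fun j _ => sq_nonneg _) (Finset.mem_univ i)
        have heq : ∑ j, lam m j ^ 2 = (B m * B m).trace :=
          sum_sq_eigenvalues (CkAux.isHermitian_transpose_mul_self (A (ns m)))
        exact hle.trans_eq heq
      have := Real.sqrt_le_sqrt (h1.trans (hR m))
      rwa [Real.sqrt_sq_eq_abs] at this
    -- entries of V are bounded by 1
    have hVentry : ∀ m i j, |V m i j| ≤ 1 := by
      intro m i j
      have hsum : ∑ l, (V m l j) ^ 2 = 1 := by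
        have := congrFun (congrFun (hV1 m) j) j
        simpa [Matrix.mul_apply, Matrix.conjTranspose_apply, pow_two] using this
      have h1 : (V m i j) ^ 2 ≤ 1 := by
        rw [← hsum]
        exact Finset.single_le_sum (f := fun l => V m l j ^ 2)
          (fun l _ => sq_nonneg _) (Finset.mem_univ i)
      have := Real.sqrt_le_sqrt h1
      rwa [Real.sqrt_sq_eq_abs, Real.sqrt_one] at this
    -- compactness extraction in a product pi space
    set W : ℕ → (Fin n → Fin n → ℝ) := fun m i j => V m i j with hWdef
    have hW_bdd : ∀ m, W m ∈ closedBall (0 : Fin n → Fin n → ℝ) 1 := by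
      intro m
      rw [mem_closedBall_zero_iff]
      refine (pi_norm_le_iff_of_nonneg zero_le_one).2 fun i => ?_
      exact (pi_norm_le_iff_of_nonneg zero_le_one).2 fun j => (hVentry m i j)
    set P : ℕ → (Fin n → ℝ) × (Fin n → Fin n → ℝ) := fun m => (lam m, W m) with hPdef
    have hPb : ∀ m, P m ∈ (closedBall (0 : Fin n → ℝ) (Real.sqrt R)) ×ˢ
        (closedBall (0 : Fin n → Fin n → ℝ) 1) := fun m => ⟨hlam_bdd m, hW_bdd m⟩
    obtain ⟨p, -, φ, hφ, hconv⟩ := tendsto_subseq_of_bounded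
      ((Metric.isBounded_closedBall).prod (Metric.isBounded_closedBall)) hPb
    obtain ⟨ρ, u⟩ := p
    set U : Matrix (Fin n) (Fin n) ℝ := Matrix.of u with hUdef
    have hlamc : Tendsto (fun i => lam (φ i)) atTop (𝓝 ρ) :=
      (continuous_fst.tendsto _).comp hconv
    have hWc : Tendsto (fun i => W (φ i)) atTop (𝓝 u) :=
      (continuous_snd.tendsto _).comp hconv
    have hVc : Tendsto (fun i => V (φ i)) atTop (𝓝 U) := by
      have cof : Continuous (fun w : Fin n → Fin n → ℝ => (Matrix.of w : Matrix (Fin n) (Fin n) ℝ)) :=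
        continuous_matrix fun i j => (continuous_apply j).comp (continuous_apply i)
      exact (cof.tendsto u).comp hWc
    -- limit identities
    have contG : Continuous (fun p : (Fin n → ℝ) × Matrix (Fin n) (Fin n) ℝ =>
        p.2 * Matrix.diagonal p.1 * star p.2) := by
      have h1 : Continuous (fun p : (Fin n → ℝ) × Matrix (Fin n) (Fin n) ℝ => star p.2) := by
        simp only [Matrix.star_eq_conjTranspose]
        exact continuous_snd.matrix_conjTranspose
      exact (continuous_snd.matrix_mul (continuous_fst.matrix_diagonal)).matrix_mul h1
    have hpair : Tendsto (fun i => ((lam (φ i) : Fin n → ℝ), V (φ i))) atTop (𝓝 (ρ, U)) :=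
      hlamc.prodMk_nhds hVc
    have hU2 : U * star U = 1 := by
      have contH : Continuous (fun M : Matrix (Fin n) (Fin n) ℝ => M * star M) := by
        have h1 : Continuous (fun M : Matrix (Fin n) (Fin n) ℝ => star M) := by
          simp only [Matrix.star_eq_conjTranspose]; exact continuous_id.matrix_conjTranspose
        exact continuous_id.matrix_mul h1
      have t1 : Tendsto (fun i => V (φ i) * star (V (φ i))) atTop (𝓝 (U * star U)) :=
        (contH.tendsto U).comp hVc
      have t2 : Tendsto (fun i => V (φ i) * star (V (φ i))) atTop (𝓝 1) := by
        simp only [hV2]; exact tendsto_const_nhds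
      exact tendsto_nhds_unique t1 t2
    have hBspec : A₀ᴴ * A₀ = U * Matrix.diagonal ρ * star U := by
      have t1 : Tendsto (fun i => B (φ i)) atTop (𝓝 (A₀ᴴ * A₀)) :=
        hBlim.comp hφ.tendsto_atTop
      have t2 : Tendsto (fun i => B (φ i)) atTop (𝓝 (U * Matrix.diagonal ρ * star U)) :=
        ((contG.tendsto (ρ, U)).comp hpair).congr fun i => (hspec (φ i)).symm
      exact tendsto_nhds_unique t1 t2
    -- multiset equality of eigenvalues
    have hms := multiset_eigen (CkAux.isHermitian_transpose_mul_self A₀) U ρ hU2 hBspec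
    have hCkval : ∀ m, Ck k (A (ns m)) = Sk k fun i => Real.sqrt (lam m i) := fun m => rfl
    have hCkA₀ : Ck k A₀ = Sk k fun i =>
        Real.sqrt ((CkAux.isHermitian_transpose_mul_self A₀).eigenvalues i) := rfl
    have hesymm : ∀ v : Fin n → ℝ, Sk k (fun i => Real.sqrt (v i))
        = ((Multiset.map v Finset.univ.val).map Real.sqrt).esymm k := by
      intro v
      rw [Multiset.map_map]
      exact Sk_eq_esymm k _
    have hfinal : Ck k A₀ = Sk k fun i => Real.sqrt (ρ i) := by
      rw [hCkA₀, hesymm, hesymm, hms]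
    refine ⟨φ, ?_⟩
    show Tendsto (fun i => Ck k (A (ns (φ i)))) atTop (𝓝 (Ck k A₀))
    rw [hfinal]
    have := (continuous_F (n := n) k).tendsto ρ
    exact (this.comp hlamc).congr fun i => (hCkval (φ i)).symm
  have unof : Continuous (fun M : Matrix (Fin n) (Fin n) ℝ => fun i j => M i j) :=
    continuous_pi fun i => continuous_pi fun j => continuous_id.matrix_elem i j
  exact key.comp unof

end CkAux

namespace GAux

/-- Half-open grid cube. -/
def hcube {n : ℕ} (m : ℕ) (z : Fin n → ℕ) : Set (Euc n) :=
  {x | ∀ i, x i ∈ Ico ((z i : ℝ) / m) (((z i : ℝ) + 1) / m)}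

variable {n : ℕ}

lemma isClosed_box (a b : Fin n → ℝ) : IsClosed {x : Euc n | ∀ i, x i ∈ Icc (a i) (b i)} := by
  have : {x : Euc n | ∀ i, x i ∈ Icc (a i) (b i)} = ⋂ i, (fun x : Euc n => x i) ⁻¹' (Icc (a i) (b i)) := by
    ext x; simp [Set.mem_iInter]
  rw [this]
  exact isClosed_iInter fun i => (isClosed_Icc).preimage (PiLp.continuous_apply (p := 2) (β := fun _ => ℝ) i)

lemma isClosed_gridCube (m : ℕ) (z : Fin n → ℕ) : IsClosed (gridCube (n := n) m z) :=
  isClosed_box _ _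

lemma isClosed_closedUnitCube : IsClosed (closedUnitCube n) := isClosed_box _ _

lemma measurableSet_gridCube (m : ℕ) (z : Fin n → ℕ) : MeasurableSet (gridCube (n := n) m z) :=
  (isClosed_gridCube m z).measurableSet

lemma measurableSet_closedUnitCube : MeasurableSet (closedUnitCube n) :=
  isClosed_closedUnitCube.measurableSet

lemma measurableSet_hcube (m : ℕ) (z : Fin n → ℕ) : MeasurableSet (hcube (n := n) m z) := by
  have : hcube (n := n) m z = ⋂ i, (fun x : Euc n => x i) ⁻¹' (Ico ((z i : ℝ)/m) (((z i : ℝ)+1)/m)) := by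
    ext x; simp [hcube, Set.mem_iInter]
  rw [this]
  exact MeasurableSet.iInter fun i => measurableSet_Ico.preimage (PiLp.continuous_apply (p := 2) (β := fun _ => ℝ) i).measurable

lemma norm_le_of_coords {x : Euc n} {R : ℝ} (hR : 0 ≤ R) (h : ∀ i, |x i| ≤ R) :
    ‖x‖ ≤ Real.sqrt n * R := by
  rw [EuclideanSpace.norm_eq]
  have h1 : ∑ i, ‖x i‖ ^ 2 ≤ ∑ _i : Fin n, R ^ 2 :=
    Finset.sum_le_sum fun i _ => by
      have := h i
      rw [Real.norm_eq_abs]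
      nlinarith [abs_nonneg (x i)]
  have h2 : (∑ _i : Fin n, R ^ 2) = n * R ^ 2 := by
    rw [Finset.sum_const, Finset.card_univ, Fintype.card_fin, nsmul_eq_mul]
  calc Real.sqrt (∑ i, ‖x i‖ ^ 2) ≤ Real.sqrt (n * R ^ 2) := Real.sqrt_le_sqrt (by rw [← h2]; exact h1)
    _ = Real.sqrt n * R := by
        rw [Real.sqrt_mul (Nat.cast_nonneg n), Real.sqrt_sq hR]

lemma isCompact_of_box {S : Set (Euc n)} {R : ℝ} (hR : 0 ≤ R)
    (hcl : IsClosed S) (hb : ∀ x ∈ S, ∀ i, |x i| ≤ R) : IsCompact S := by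
  apply Metric.isCompact_of_isClosed_isBounded hcl
  apply (Metric.isBounded_closedBall (x := (0 : Euc n)) (r := Real.sqrt n * R)).subset
  intro x hx
  rw [Metric.mem_closedBall, dist_zero_right]
  exact norm_le_of_coords hR (hb x hx)

lemma isCompact_gridCube {m : ℕ} (hm : 0 < m) (z : Fin n → ℕ) :
    IsCompact (gridCube (n := n) m z) := by
  classical
  set R : ℝ := (((Finset.univ.sup z : ℕ) : ℝ) + 1) / m with hR
  have hm' : (0:ℝ) < m := by exact_mod_cast hm
  have hR0 : 0 ≤ R := by positivity
  refine isCompact_of_box hR0 (isClosed_gridCube m z) fun x hx i => ?_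
  have h1 := hx i
  have hz0 : (0:ℝ) ≤ (z i : ℝ) / m := by positivity
  rw [abs_le]
  refine ⟨by linarith [h1.1], h1.2.trans ?_⟩
  rw [hR, div_le_div_iff_of_pos_right hm']
  have : (z i : ℝ) ≤ ((Finset.univ.sup z : ℕ) : ℝ) := by
    exact_mod_cast Finset.le_sup (Finset.mem_univ i)
  linarith

lemma isCompact_closedUnitCube : IsCompact (closedUnitCube n) := by
  refine isCompact_of_box zero_le_one isClosed_closedUnitCube fun x hx i => ?_
  have h1 := hx i
  rw [abs_le]
  exact ⟨by linarith [h1.1], h1.2⟩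

/-- Transfer of box volumes to the pi measure. -/
lemma volume_box (T : Fin n → Set ℝ) (hT : ∀ i, MeasurableSet (T i)) :
    volume {x : Euc n | ∀ i, x i ∈ T i} = ∏ i, volume (T i) := by
  have h := (EuclideanSpace.volume_preserving_symm_measurableEquiv_toLp (Fin n)).measure_preimage
    (MeasurableSet.univ_pi hT).nullMeasurableSet
  have hset : (MeasurableEquiv.toLp 2 (Fin n → ℝ)).symm ⁻¹' (Set.pi univ T)
      = {x : Euc n | ∀ i, x i ∈ T i} := by
    ext x
    simp only [Set.mem_preimage, Set.mem_pi, Set.mem_univ, forall_true_left, Set.mem_setOf_eq]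
    rfl
  rw [hset] at h
  rw [h, volume_pi_pi]

lemma volume_gridCube {m : ℕ} (hm : 0 < m) (z : Fin n → ℕ) :
    volume (gridCube (n := n) m z) = ENNReal.ofReal ((1:ℝ)/m) ^ n := by
  have hm' : (0:ℝ) < m := by exact_mod_cast hm
  have := volume_box (n := n) (fun i => Icc ((z i : ℝ)/m) (((z i : ℝ)+1)/m))
    (fun i => measurableSet_Icc)
  rw [show gridCube (n := n) m z = {x : Euc n | ∀ i, x i ∈ Icc ((z i : ℝ)/m) (((z i : ℝ)+1)/m)} from rfl, this]
  have : ∀ i : Fin n, volume (Icc ((z i : ℝ)/m) (((z i : ℝ)+1)/m)) = ENNReal.ofReal ((1:ℝ)/m) := by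
    intro i
    rw [Real.volume_Icc]
    congr 1
    field_simp
    ring
  simp [this, Finset.prod_const, Finset.card_univ]

lemma volume_hcube {m : ℕ} (hm : 0 < m) (z : Fin n → ℕ) :
    volume (hcube (n := n) m z) = ENNReal.ofReal ((1:ℝ)/m) ^ n := by
  have hm' : (0:ℝ) < m := by exact_mod_cast hm
  have := volume_box (n := n) (fun i => Ico ((z i : ℝ)/m) (((z i : ℝ)+1)/m))
    (fun i => measurableSet_Ico)
  rw [show hcube (n := n) m z = {x : Euc n | ∀ i, x i ∈ Ico ((z i : ℝ)/m) (((z i : ℝ)+1)/m)} from rfl, this]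
  have : ∀ i : Fin n, volume (Ico ((z i : ℝ)/m) (((z i : ℝ)+1)/m)) = ENNReal.ofReal ((1:ℝ)/m) := by
    intro i
    rw [Real.volume_Ico]
    congr 1
    field_simp
    ring
  simp [this, Finset.prod_const, Finset.card_univ]

lemma volume_closedUnitCube : volume (closedUnitCube n) = 1 := by
  have := volume_box (n := n) (fun _ => Icc (0:ℝ) 1) (fun i => measurableSet_Icc)
  rw [show closedUnitCube n = {x : Euc n | ∀ i, x i ∈ Icc (0:ℝ) 1} from rfl, this]
  simp [Real.volume_Icc]

lemma volume_hyperplane (i : Fin n) (c : ℝ) : volume {x : Euc n | x i = c} = 0 := by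
  classical
  have hset : {x : Euc n | x i = c} = {x : Euc n | ∀ j, x j ∈ (if j = i then ({c} : Set ℝ) else univ)} := by
    ext x
    simp only [Set.mem_setOf_eq]
    constructor
    · intro h j
      by_cases hj : j = i
      · subst hj; simp [h]
      · simp [hj]
    · intro h
      have := h i
      simpa using this
  rw [hset, volume_box _ (fun j => by split <;> simp)]
  apply Finset.prod_eq_zero (Finset.mem_univ i)
  simp

lemma hcube_subset_gridCube (m : ℕ) (z : Fin n → ℕ) : hcube (n := n) m z ⊆ gridCube m z :=
  fun x hx i => ⟨(hx i).1, le_of_lt (hx i).2⟩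

lemma gridCube_ae_hcube (m : ℕ) (z : Fin n → ℕ) :
    (gridCube (n := n) m z : Set (Euc n)) =ᵐ[volume] hcube m z := by
  rw [MeasureTheory.ae_eq_set]
  constructor
  · have hsub : gridCube (n := n) m z \ hcube m z ⊆ ⋃ i, {x : Euc n | x i = ((z i : ℝ)+1)/m} := by
      intro x hx
      simp only [Set.mem_diff, gridCube, hcube, Set.mem_setOf_eq] at hx
      obtain ⟨h1, h2⟩ := hx
      push_neg at h2
      obtain ⟨i, hi⟩ := h2
      have hxi := h1 i
      rw [Set.mem_iUnion]
      refine ⟨i, ?_⟩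
      have : ¬ x i < ((z i : ℝ)+1)/m := fun hlt => hi ⟨hxi.1, hlt⟩
      exact le_antisymm hxi.2 (not_lt.mp this)
    refine measure_mono_null hsub ?_
    exact measure_iUnion_null fun i => volume_hyperplane i _
  · rw [Set.diff_eq_empty.mpr (hcube_subset_gridCube m z)]
    simp

/-- Disjointness of half-open cubes. -/
lemma hcube_disjoint {m : ℕ} (hm : 0 < m) {z z' : Fin n → ℕ} (hzz : z ≠ z') :
    Disjoint (hcube (n := n) m z) (hcube m z') := by
  have hm' : (0:ℝ) < m := by exact_mod_cast hm
  rw [Set.disjoint_left]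
  intro x hx hx'
  apply hzz
  funext i
  by_contra hne
  rcases Nat.lt_or_ge (z i) (z' i) with h | h
  · have h1 : (x : Euc n) i < ((z i : ℝ)+1)/m := (hx i).2
    have h2 : ((z' i : ℝ))/m ≤ x i := (hx' i).1
    have hle : ((z i : ℝ) + 1) ≤ (z' i : ℝ) := by exact_mod_cast h
    have : ((z i : ℝ)+1)/m ≤ (z' i : ℝ)/m := by gcongr
    linarith
  · have h' : z' i < z i := lt_of_le_of_ne h fun e => hne e.symm
    have h1 : (x : Euc n) i < ((z' i : ℝ)+1)/m := (hx' i).2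
    have h2 : ((z i : ℝ))/m ≤ x i := (hx i).1
    have hle : ((z' i : ℝ) + 1) ≤ (z i : ℝ) := by exact_mod_cast h'
    have : ((z' i : ℝ)+1)/m ≤ (z i : ℝ)/m := by gcongr
    linarith

/-- Every point of the closed unit cube lies in some grid cube. -/
lemma closedUnitCube_subset_cover {m : ℕ} (hm : 0 < m) :
    closedUnitCube n ⊆ ⋃ z : Fin n → Fin m, gridCube m (fun i => (z i : ℕ)) := by
  intro x hx
  rw [Set.mem_iUnion]
  have hm' : (0:ℝ) < m := by exact_mod_cast hm
  have key : ∀ i, ∃ k : Fin m, ((k : ℕ):ℝ)/m ≤ x i ∧ x i ≤ (((k : ℕ):ℝ)+1)/m := by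
    intro i
    have h0 : (0:ℝ) ≤ x i := (hx i).1
    have h1 : x i ≤ 1 := (hx i).2
    by_cases hfl : ⌊x i * m⌋₊ < m
    · refine ⟨⟨⌊x i * m⌋₊, hfl⟩, ?_, ?_⟩
      · rw [div_le_iff₀ hm']
        exact Nat.floor_le (by positivity)
      · rw [le_div_iff₀ hm']
        exact (Nat.lt_floor_add_one (x i * m)).le
    · push_neg at hfl
      have hfloor_le : ((⌊x i * m⌋₊ : ℕ):ℝ) ≤ x i * m := Nat.floor_le (by positivity)
      have hmlk : (m : ℝ) ≤ x i * m := by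
        calc (m:ℝ) ≤ (⌊x i * m⌋₊ : ℝ) := by exact_mod_cast hfl
          _ ≤ x i * m := hfloor_le
      have hx1 : x i = 1 := le_antisymm h1 (by nlinarith)
      have hcast : ((m - 1 : ℕ) : ℝ) = (m : ℝ) - 1 := by
        rw [Nat.cast_sub hm]
        simp
      refine ⟨⟨m - 1, Nat.sub_lt hm Nat.one_pos⟩, ?_, ?_⟩
      · rw [hx1, div_le_one hm', hcast]
        linarith
      · rw [hx1, le_div_iff₀ hm', hcast]
        linarith
  choose k hk using key
  exact ⟨k, fun i => ⟨(hk i).1, (hk i).2⟩⟩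

/-- Decomposition of a half-open cube into half-open subcubes at a finer dyadic-like scale. -/
lemma hcube_decomp {m M : ℕ} (hm : 0 < m) (hM : 0 < M) (hdvd : m ∣ M) (z : Fin n → ℕ) :
    hcube (n := n) m z = ⋃ o : Fin n → Fin (M / m), hcube M (fun i => (M / m) * z i + (o i : ℕ)) := by
  have hc : 0 < M / m := Nat.div_pos (Nat.le_of_dvd hM hdvd) hm
  set c := M / m with hcdef
  have hcm : c * m = M := Nat.div_mul_cancel hdvd
  have hm' : (0:ℝ) < m := by exact_mod_cast hm
  have hM' : (0:ℝ) < M := by exact_mod_cast hM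
  have hc' : (0:ℝ) < c := by exact_mod_cast hc
  have hcmR : (c:ℝ) * m = M := by exact_mod_cast hcm
  ext x
  simp only [Set.mem_iUnion]
  constructor
  · intro hx
    have key : ∀ i, ∃ o : Fin c,
        ((c * z i + (o : ℕ) : ℕ):ℝ)/M ≤ x i ∧ x i < (((c * z i + (o : ℕ) : ℕ):ℝ)+1)/M := by
      intro i
      have hlow : ((z i : ℝ))/m ≤ x i := (hx i).1
      have hhigh : x i < ((z i : ℝ)+1)/m := (hx i).2
      have hx0 : (0:ℝ) ≤ x i := le_trans (by positivity) hlow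
      have hlow' : ((c : ℝ) * z i) ≤ x i * M := by
        rw [← hcmR]
        rw [div_le_iff₀ hm'] at hlow
        nlinarith
      have hhigh' : x i * M < (c:ℝ) * z i + c := by
        rw [← hcmR]
        rw [lt_div_iff₀ hm'] at hhigh
        nlinarith
      set w : ℕ := ⌊x i * M⌋₊ with hwdef
      have hw_ge : c * z i ≤ w := Nat.le_floor (by exact_mod_cast hlow')
      have hw_lt : w < c * z i + c := by
        have h' : x i * M < ((c * z i + c : ℕ) : ℝ) := by push_cast; nlinarith
        exact (Nat.floor_lt (by positivity)).mpr h'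
      refine ⟨⟨w - c * z i, by omega⟩, ?_, ?_⟩
      · have hww : c * z i + (w - c * z i) = w := by omega
        rw [hww, div_le_iff₀ hM']
        exact Nat.floor_le (by positivity)
      · have hww : c * z i + (w - c * z i) = w := by omega
        rw [hww, lt_div_iff₀ hM']
        have := Nat.lt_floor_add_one (x i * M)
        push_cast
        nlinarith [Nat.lt_floor_add_one (x i * M)]
    choose o ho using key
    exact ⟨o, fun i => ⟨(ho i).1, (ho i).2⟩⟩
  · rintro ⟨o, ho⟩ i
    have h := ho i
    have ho_lt : ((o i : ℕ) : ℝ) < c := by exact_mod_cast (o i).2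
    have h1 : ((c * z i + (o i : ℕ) : ℕ):ℝ)/M ≤ x i := h.1
    have h2 : x i < (((c * z i + (o i : ℕ) : ℕ):ℝ)+1)/M := h.2
    constructor
    · have hne : (c:ℝ) * z i ≤ ((c * z i + (o i : ℕ) : ℕ):ℝ) := by
        push_cast
        have : (0:ℝ) ≤ ((o i : ℕ) : ℝ) := by positivity
        linarith
      calc ((z i : ℝ))/m = ((c:ℝ) * z i)/M := by
            rw [div_eq_div_iff hm'.ne' hM'.ne', ← hcmR]; ring
        _ ≤ ((c * z i + (o i : ℕ) : ℕ):ℝ)/M := by gcongr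
        _ ≤ x i := h1
    · have hoc : ((o i : ℕ) : ℝ) + 1 ≤ (c : ℝ) := by exact_mod_cast (o i).2
      have hnum : (((c * z i + (o i : ℕ) : ℕ):ℝ)+1) ≤ (c:ℝ) * ((z i : ℝ) + 1) := by
        push_cast
        nlinarith
      calc x i < (((c * z i + (o i : ℕ) : ℕ):ℝ)+1)/M := h2
        _ ≤ ((c:ℝ) * ((z i : ℝ) + 1))/M := by gcongr
        _ = ((z i : ℝ)+1)/m := by
            rw [div_eq_div_iff hM'.ne' hm'.ne', ← hcmR]; ring

/-- Injectivity needed for disjointness of the subcubes. -/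
lemma hcube_decomp_inj {m M : ℕ} (z : Fin n → ℕ) {o o' : Fin n → Fin (M / m)}
    (h : o ≠ o') :
    (fun i => (M / m) * z i + (o i : ℕ)) ≠ (fun i => (M / m) * z i + (o' i : ℕ)) := by
  intro he
  apply h
  funext i
  have := congrFun he i
  have : (o i : ℕ) = (o' i : ℕ) := by omega
  exact Fin.ext this

end GAux



namespace MAux
open GAux

variable {n : ℕ}

lemma Ck_nonneg (k : ℕ) (A : Matrix (Fin n) (Fin n) ℝ) : 0 ≤ Ck k A := by
  unfold Ck Sk
  exact Finset.sum_nonneg fun s _ => Finset.prod_nonneg fun i _ => Real.sqrt_nonneg _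

lemma continuous_hess {g : Euc n → ℝ} (hg : ContDiff ℝ 2 g) :
    Continuous fun x => hess g x := by
  have hD1 : ContDiff ℝ 1 (fderiv ℝ g) := hg.fderiv_right (by norm_num)
  have hD2cont : Continuous (fderiv ℝ (fderiv ℝ g)) := hD1.continuous_fderiv (by norm_num)
  apply continuous_matrix
  intro i j
  have heq : ∀ x : Euc n, hess g x i j
      = fderiv ℝ (fderiv ℝ g) x (EuclideanSpace.single i 1) (EuclideanSpace.single j 1) := by
    intro x
    have hdiff : DifferentiableAt ℝ (fderiv ℝ g) x := (hD1.differentiable (by norm_num)).differentiableAt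
    show fderiv ℝ (fun y => fderiv ℝ g y (EuclideanSpace.single j 1)) x
        (EuclideanSpace.single i 1) = _
    rw [fderiv_clm_apply hdiff (differentiableAt_const _)]
    simp
  have hcont : Continuous fun x : Euc n =>
      fderiv ℝ (fderiv ℝ g) x (EuclideanSpace.single i 1) (EuclideanSpace.single j 1) := by
    have h1 : Continuous fun x : Euc n =>
        fderiv ℝ (fderiv ℝ g) x (EuclideanSpace.single i 1) :=
      ((ContinuousLinearMap.apply ℝ (Euc n →L[ℝ] ℝ)
        (EuclideanSpace.single i 1)).continuous).comp hD2cont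
    exact ((ContinuousLinearMap.apply ℝ ℝ (EuclideanSpace.single j 1)).continuous).comp h1
  have : (fun x : Euc n => hess g x i j) = fun x =>
      fderiv ℝ (fderiv ℝ g) x (EuclideanSpace.single i 1) (EuclideanSpace.single j 1) :=
    funext heq
  rw [this]
  exact hcont

lemma coord_le_norm (v : Euc n) (i : Fin n) : |v i| ≤ ‖v‖ := by
  rw [EuclideanSpace.norm_eq]
  have h1 : (v i) ^ 2 ≤ ∑ l, ‖v l‖ ^ 2 := by
    have := Finset.single_le_sum (f := fun l => ‖v l‖ ^ 2)
      (fun l _ => sq_nonneg _) (Finset.mem_univ i)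
    have h2 : (v i) ^ 2 = ‖v i‖ ^ 2 := by rw [Real.norm_eq_abs, sq_abs]
    rw [h2]
    simpa using this
  calc |v i| = Real.sqrt ((v i) ^ 2) := (Real.sqrt_sq_eq_abs _).symm
    _ ≤ Real.sqrt (∑ l, ‖v l‖ ^ 2) := Real.sqrt_le_sqrt h1

lemma integrableOn_gridCube {g : Euc n → ℝ} (hg : Continuous g) {m : ℕ} (hm : 0 < m)
    (z : Fin n → ℕ) : IntegrableOn g (gridCube m z) volume :=
  ContinuousOn.integrableOn_compact (isCompact_gridCube hm z) hg.continuousOn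

lemma integrableOn_hcube {g : Euc n → ℝ} (hg : Continuous g) {m : ℕ} (hm : 0 < m)
    (z : Fin n → ℕ) : IntegrableOn g (hcube m z) volume :=
  (integrableOn_gridCube hg hm z).mono_set (hcube_subset_gridCube m z)

lemma volr_gridCube {m : ℕ} (hm : 0 < m) (z : Fin n → ℕ) :
    (volume (gridCube (n := n) m z)).toReal = ((1:ℝ)/m) ^ n := by
  rw [volume_gridCube hm, ← ENNReal.ofReal_pow (by positivity), ENNReal.toReal_ofReal (by positivity)]

lemma dvd_chain (m : ℕ → ℕ) (hdiv : ∀ j : ℕ, 1 ≤ j → m j ∣ m (j+1)) {j i : ℕ}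
    (hj : 1 ≤ j) (hji : j ≤ i) : m j ∣ m i := by
  induction i, hji using Nat.le_induction with
  | base => exact dvd_refl _
  | succ i hji ih => exact ih.trans (hdiv i (hj.trans hji))

/-- The step bound transferred to coarser cubes. -/
lemma step_bound (τ : ℝ) (m : ℕ → ℕ) (g : ℕ → Euc n → ℝ)
    (hgc : ∀ l, Continuous (g l))
    (hmpos : ∀ j : ℕ, 1 ≤ j → 0 < m j)
    (hdiv : ∀ j : ℕ, 1 ≤ j → m j ∣ m (j+1))
    (hτpos : 0 ≤ τ)
    (hstep' : ∀ i : ℕ, 1 ≤ i → ∀ w : Fin n → ℕ, (∀ a, w a < m i) →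
      |∫ x in gridCube (m i) w, (g i x - g (i-1) x)| ≤ τ ^ i * (volume (gridCube (m i) w)).toReal)
    {j i : ℕ} (hj : 1 ≤ j) (hji : j ≤ i) (z : Fin n → ℕ) (hz : ∀ a, z a < m j) :
    |∫ x in gridCube (m j) z, (g i x - g (i-1) x)| ≤
      τ ^ i * (volume (gridCube (m j) z)).toReal := by
  classical
  have hi : 1 ≤ i := hj.trans hji
  have hmj : 0 < m j := hmpos j hj
  have hmi : 0 < m i := hmpos i hi
  have hdvd : m j ∣ m i := dvd_chain m hdiv hj hji
  set c := m i / m j with hcdef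
  have hc : 0 < c := Nat.div_pos (Nat.le_of_dvd hmi hdvd) hmj
  have hcm : c * m j = m i := Nat.div_mul_cancel hdvd
  set h : Euc n → ℝ := fun x => g i x - g (i-1) x with hhdef
  have hhc : Continuous h := (hgc i).sub (hgc (i-1))
  set w : (Fin n → Fin c) → (Fin n → ℕ) := fun o a => c * z a + (o a : ℕ) with hwdef
  have hwlt : ∀ o : Fin n → Fin c, ∀ a, w o a < m i := by
    intro o a
    have h1 : (o a : ℕ) < c := (o a).2
    have h2 : z a < m j := hz a
    calc c * z a + (o a : ℕ) < c * z a + c := by omega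
      _ = c * (z a + 1) := by ring
      _ ≤ c * m j := by
          have : z a + 1 ≤ m j := h2
          exact Nat.mul_le_mul_left c this
      _ = m i := hcm
  -- decompose the integral
  have hsplit : ∫ x in gridCube (m j) z, h x = ∑ o : Fin n → Fin c, ∫ x in hcube (m i) (w o), h x := by
    have hbu := MeasureTheory.integral_biUnion_finset (μ := volume) (f := h) Finset.univ
      (s := fun o : Fin n → Fin c => hcube (m i) (w o))
      (fun o _ => measurableSet_hcube _ _)
      (fun o _ o' _ hne => hcube_disjoint hmi (hcube_decomp_inj z hne))
      (fun o _ => integrableOn_hcube hhc hmi _)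
    rw [setIntegral_congr_set (gridCube_ae_hcube (m j) z), hcube_decomp hmj hmi hdvd z]
    simpa using hbu
  have hbound : ∀ o : Fin n → Fin c,
      |∫ x in hcube (m i) (w o), h x| ≤ τ ^ i * ((1:ℝ)/(m i)) ^ n := by
    intro o
    have := hstep' i hi (w o) (hwlt o)
    rw [volr_gridCube hmi] at this
    rw [← setIntegral_congr_set (gridCube_ae_hcube (m i) (w o))]
    exact this
  have hcard : (Fintype.card (Fin n → Fin c) : ℝ) = (c : ℝ) ^ n := by
    rw [Fintype.card_fun]
    simp
  calc |∫ x in gridCube (m j) z, h x|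
      ≤ ∑ o : Fin n → Fin c, |∫ x in hcube (m i) (w o), h x| := by
        rw [hsplit]; exact Finset.abs_sum_le_sum_abs _ _
    _ ≤ ∑ _o : Fin n → Fin c, τ ^ i * ((1:ℝ)/(m i)) ^ n :=
        Finset.sum_le_sum fun o _ => hbound o
    _ = (c:ℝ) ^ n * (τ ^ i * ((1:ℝ)/(m i)) ^ n) := by
        rw [Finset.sum_const, Finset.card_univ, nsmul_eq_mul, hcard]
    _ = τ ^ i * (((c:ℝ) * ((1:ℝ)/(m i))) ^ n) := by rw [mul_pow]; ring
    _ = τ ^ i * (volume (gridCube (m j) z)).toReal := by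
        rw [volr_gridCube hmj]
        congr 2
        have hmj' : ((m j : ℝ)) ≠ 0 := by positivity
        have hmi' : ((m i : ℝ)) ≠ 0 := by positivity
        have hcmR : (c : ℝ) * (m j : ℝ) = (m i : ℝ) := by exact_mod_cast hcm
        field_simp
        linarith [hcmR]

/-- Telescoping estimate. -/
lemma telescope (τ : ℝ) (hτ : τ ∈ Set.Ioo (0:ℝ) 1) (m : ℕ → ℕ) (g : ℕ → Euc n → ℝ)
    (hgc : ∀ l, Continuous (g l))
    (hmpos : ∀ j : ℕ, 1 ≤ j → 0 < m j)
    (hdiv : ∀ j : ℕ, 1 ≤ j → m j ∣ m (j+1))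
    (hstep' : ∀ i : ℕ, 1 ≤ i → ∀ w : Fin n → ℕ, (∀ a, w a < m i) →
      |∫ x in gridCube (m i) w, (g i x - g (i-1) x)| ≤ τ ^ i * (volume (gridCube (m i) w)).toReal)
    {j : ℕ} (hj : 1 ≤ j) (z : Fin n → ℕ) (hz : ∀ a, z a < m j)
    {l : ℕ} (hl : j ≤ l) :
    ∫ x in gridCube (m j) z, g l x ≤ (∫ x in gridCube (m j) z, g (j-1) x)
      + (τ ^ j / (1 - τ)) * (volume (gridCube (m j) z)).toReal := by
  obtain ⟨hτ0, hτ1⟩ := hτ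
  have hmj : 0 < m j := hmpos j hj
  have hvol : 0 ≤ (volume (gridCube (m j) z)).toReal := ENNReal.toReal_nonneg
  have key : ∀ p : ℕ, ∫ x in gridCube (m j) z, g (j - 1 + p) x ≤
      (∫ x in gridCube (m j) z, g (j-1) x)
        + (τ ^ j * ∑ d ∈ Finset.range p, τ ^ d) * (volume (gridCube (m j) z)).toReal := by
    intro p
    induction p with
    | zero => simp
    | succ p ih =>
      have hidx : j - 1 + (p + 1) = (j + p) := by omega
      have hidx2 : j - 1 + p = (j + p) - 1 := by omega
      have hstepb := step_bound τ m g hgc hmpos hdiv (le_of_lt hτ0) hstep' hj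
        (Nat.le_add_right j p) z hz
      have hint1 : IntegrableOn (g (j+p)) (gridCube (m j) z) volume :=
        integrableOn_gridCube (hgc _) hmj z
      have hint2 : IntegrableOn (g ((j+p)-1)) (gridCube (m j) z) volume :=
        integrableOn_gridCube (hgc _) hmj z
      have hsub : ∫ x in gridCube (m j) z, (g (j+p) x - g ((j+p)-1) x)
          = (∫ x in gridCube (m j) z, g (j+p) x) - ∫ x in gridCube (m j) z, g ((j+p)-1) x :=
        MeasureTheory.integral_sub hint1 hint2
      have habs := (abs_le.mp hstepb).2
      rw [hsub] at habs
      have hto : ∫ x in gridCube (m j) z, g (j+p) x ≤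
          (∫ x in gridCube (m j) z, g ((j+p)-1) x)
            + τ ^ (j+p) * (volume (gridCube (m j) z)).toReal := by linarith
      rw [hidx]
      rw [hidx2] at ih
      have hgeom : (τ ^ j * ∑ d ∈ Finset.range (p+1), τ ^ d)
          = τ ^ j * ∑ d ∈ Finset.range p, τ ^ d + τ ^ (j + p) := by
        rw [Finset.sum_range_succ, mul_add, pow_add]
      rw [hgeom]
      calc ∫ x in gridCube (m j) z, g (j + p) x
          ≤ (∫ x in gridCube (m j) z, g ((j+p)-1) x)
            + τ ^ (j+p) * (volume (gridCube (m j) z)).toReal := hto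
        _ ≤ (∫ x in gridCube (m j) z, g (j-1) x)
            + (τ ^ j * ∑ d ∈ Finset.range p, τ ^ d) * (volume (gridCube (m j) z)).toReal
            + τ ^ (j+p) * (volume (gridCube (m j) z)).toReal := by linarith
        _ = (∫ x in gridCube (m j) z, g (j-1) x)
            + (τ ^ j * ∑ d ∈ Finset.range p, τ ^ d + τ ^ (j + p))
              * (volume (gridCube (m j) z)).toReal := by ring
  have hp := key (l - (j - 1))
  have hidx : j - 1 + (l - (j-1)) = l := by omega
  rw [hidx] at hp
  refine hp.trans ?_
  have hgeomle : τ ^ j * ∑ d ∈ Finset.range (l - (j-1)), τ ^ d ≤ τ ^ j / (1 - τ) := by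
    have hsum : ∑ d ∈ Finset.range (l - (j-1)), τ ^ d ≤ 1 / (1 - τ) := by
      rw [geom_sum_eq (ne_of_lt hτ1)]
      have hEq : (τ ^ (l - (j-1)) - 1)/(τ - 1) = (1 - τ ^ (l - (j-1)))/(1 - τ) := by
        rw [div_eq_div_iff (by linarith) (by linarith)]
        ring
      rw [hEq, div_le_div_iff₀ (by linarith) (by linarith)]
      have : 0 ≤ τ ^ (l - (j-1)) := le_of_lt (pow_pos hτ0 _)
      nlinarith
    calc τ ^ j * ∑ d ∈ Finset.range (l - (j-1)), τ ^ d ≤ τ ^ j * (1 / (1-τ)) := by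
          apply mul_le_mul_of_nonneg_left hsum (le_of_lt (pow_pos hτ0 _))
      _ = τ ^ j / (1 - τ) := by ring
  have := mul_le_mul_of_nonneg_right hgeomle hvol
  linarith

end MAux


set_option maxHeartbeats 2000000 in
/-- (Singularity of the limit measure.) With `τ ∈ (0,1)`, `m_j ≥ 2^j`,
`m_j ∣ m_{j+1}`, the cube-wise estimates (i), the oscillation estimates (ii), and
`C_k(∇²f_j) → 0` a.e. on `Q₀`, the weak-* limit measure `μ` of `C_k(∇²f_j) dx` is singular
with respect to Lebesgue measure on `Q₀`. -/
theorem limit_hessian_measure_is_singular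
    (n k : ℕ) (hk1 : 1 ≤ k) (hkn : k ≤ n) (τ : ℝ) (hτ : τ ∈ Set.Ioo (0:ℝ) 1)
    (m : ℕ → ℕ) (hm : ∀ j : ℕ, 1 ≤ j → 2 ^ j ≤ m j) (hdiv : ∀ j : ℕ, 1 ≤ j → m j ∣ m (j+1))
    (f : ℕ → Euc n → ℝ) (hf : ∀ j, ContDiff ℝ 2 (f j))
    (hstep : ∀ j : ℕ, 1 ≤ j → ∀ z : Fin n → ℕ, (∀ i, z i < m j) →
      |∫ x in gridCube (m j) z, (Ck k (hess (f j) x) - Ck k (hess (f (j-1)) x))| ≤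
        τ ^ j * (volume (gridCube (m j) z)).toReal)
    (hosc : ∀ j : ℕ, 1 ≤ j → ∀ z : Fin n → ℕ, (∀ i, z i < m j) →
      ∀ x ∈ gridCube (m j) z, ∀ y ∈ gridCube (m j) z,
        |Ck k (hess (f (j-1)) y) - Ck k (hess (f (j-1)) x)| ≤ τ ^ j)
    (hae : ∀ᵐ x ∂(volume.restrict (closedUnitCube n)),
      Tendsto (fun j => Ck k (hess (f j) x)) atTop (𝓝 0))
    (μ : Measure (Euc n)) (hμfin : IsFiniteMeasure μ) (hμsupp : μ (closedUnitCube n)ᶜ = 0)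
    (hμlim : ∀ φ : Euc n → ℝ, ContinuousOn φ (closedUnitCube n) →
      Tendsto (fun j => ∫ x in closedUnitCube n, Ck k (hess (f j) x) * φ x) atTop
        (𝓝 (∫ x in closedUnitCube n, φ x ∂μ))) :
    Measure.MutuallySingular μ (volume.restrict (closedUnitCube n)) := by
  classical
  haveI := hμfin
  obtain ⟨hτ0, hτ1⟩ := hτ
  have h1τ : (0:ℝ) < 1 - τ := by linarith
  set g : ℕ → Euc n → ℝ := fun l x => Ck k (hess (f l) x) with hgdef
  have hgc : ∀ l, Continuous (g l) := fun l =>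
    (CkAux.continuous_Ck k).comp (MAux.continuous_hess (hf l))
  have hg0 : ∀ l x, 0 ≤ g l x := fun l x => MAux.Ck_nonneg k _
  have hmpos : ∀ j : ℕ, 1 ≤ j → 0 < m j := by
    intro j hj
    have h1 := hm j hj
    have h2 : 1 ≤ 2 ^ j := Nat.one_le_two_pow
    omega
  have hQmeas : MeasurableSet (closedUnitCube n) := GAux.measurableSet_closedUnitCube
  have hQcompact : IsCompact (closedUnitCube n) := GAux.isCompact_closedUnitCube
  have hQvol : volume (closedUnitCube n) = 1 := GAux.volume_closedUnitCube
  have hstep' : ∀ i : ℕ, 1 ≤ i → ∀ w : Fin n → ℕ, (∀ a, w a < m i) →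
      |∫ x in gridCube (m i) w, (g i x - g (i-1) x)| ≤
        τ ^ i * (volume (gridCube (m i) w)).toReal :=
    fun i hi w hw => hstep i hi w hw
  have hosc' : ∀ j : ℕ, 1 ≤ j → ∀ z : Fin n → ℕ, (∀ i, z i < m j) →
      ∀ x ∈ gridCube (m j) z, ∀ y ∈ gridCube (m j) z,
        |g (j-1) y - g (j-1) x| ≤ τ ^ j := fun j hj z hz x hx y hy => hosc j hj z hz x hx y hy
  -- ================= the per-ε construction =================
  have key : ∀ ε : ℝ, 0 < ε → ∃ s : Set (Euc n), MeasurableSet s ∧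
      μ s ≤ ENNReal.ofReal ε ∧ (volume.restrict (closedUnitCube n)) sᶜ ≤ ENNReal.ofReal ε := by
    intro ε hε
    -- Egorov
    obtain ⟨t, htsub, htmeas, htvol, hunif⟩ :=
      MeasureTheory.tendstoUniformlyOn_of_ae_tendsto (μ := volume)
        (f := fun l x => g l x) (g := fun _ : Euc n => (0:ℝ)) (s := closedUnitCube n)
        (fun l => (hgc l).stronglyMeasurable) stronglyMeasurable_const hQmeas
        (by rw [hQvol]; exact ENNReal.one_ne_top)
        ((ae_restrict_iff' hQmeas).mp hae) hε
    have hδ : 0 < ε/2 := by linarith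
    obtain ⟨J, hJ⟩ : ∃ J, ∀ l, J ≤ l → ∀ x ∈ closedUnitCube n \ t, |g l x| ≤ ε/2 := by
      rw [Metric.tendstoUniformlyOn_iff] at hunif
      obtain ⟨J, hJ'⟩ := Filter.eventually_atTop.mp (hunif (ε/2) hδ)
      refine ⟨J, fun l hl x hx => ?_⟩
      have := hJ' l hl x hx
      rw [Real.dist_eq] at this
      simp only [zero_sub, abs_neg] at this
      exact this.le
    -- choice of scale j
    have hτlim : Tendsto (fun i : ℕ => τ ^ i) atTop (𝓝 0) :=
      tendsto_pow_atTop_nhds_zero_of_lt_one (le_of_lt hτ0) hτ1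
    have hpos6 : (0:ℝ) < ε * (1 - τ) / 6 := by positivity
    obtain ⟨j₀, hj₀⟩ := Filter.eventually_atTop.mp (hτlim.eventually_lt_const hpos6)
    set j := max (max 1 (J+1)) j₀ with hjdef
    have hj1 : 1 ≤ j := le_trans (le_max_left 1 (J+1)) (le_max_left _ _)
    have hjJ : J ≤ j - 1 := by
      have : J + 1 ≤ j := le_trans (le_max_right 1 (J+1)) (le_max_left _ _)
      omega
    have hjτ : τ ^ j < ε * (1 - τ)/6 := hj₀ j (le_max_right _ _)
    set M := m j with hMdef
    have hM : 0 < M := hmpos j hj1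
    have hM' : (0:ℝ) < (M:ℝ) := by exact_mod_cast hM
    set E : Set (Euc n) := closedUnitCube n \ t with hEdef
    set cub : (Fin n → Fin M) → Set (Euc n) := fun z => gridCube M (fun a => (z a : ℕ))
      with hcubdef
    set good : Set (Fin n → Fin M) := {z | (cub z ∩ E).Nonempty} with hgooddef
    set G : Set (Euc n) := ⋃ z ∈ good, cub z with hGdef
    have hGclosed : IsClosed G :=
      (Set.toFinite good).isClosed_biUnion fun z _ => GAux.isClosed_gridCube _ _
    have hGmeas : MeasurableSet G := hGclosed.measurableSet
    refine ⟨G, hGmeas, ?_, ?_⟩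
    · -- μ G is small
      by_cases hGne : G.Nonempty
      swap
      · rw [Set.not_nonempty_iff_eq_empty] at hGne
        rw [hGne]
        simp
      set r : ℝ := 1/(2*(M:ℝ)) with hrdef
      have hr : 0 < r := by positivity
      set φ : Euc n → ℝ := fun x => max 0 (1 - infDist x G / r) with hφdef
      have hφcont : Continuous φ := continuous_const.max
        ((continuous_const.sub ((Metric.continuous_infDist_pt G).div_const r)))
      have hφ0 : ∀ x, 0 ≤ φ x := fun x => le_max_left _ _
      have hφ1 : ∀ x, φ x ≤ 1 := by
        intro x
        apply max_le (by norm_num)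
        have : 0 ≤ infDist x G / r := div_nonneg Metric.infDist_nonneg hr.le
        linarith
      have hφG : ∀ x ∈ G, φ x = 1 := by
        intro x hx
        rw [hφdef]
        simp only [Metric.infDist_zero_of_mem hx]
        norm_num
      have hφout : ∀ x, r ≤ infDist x G → φ x = 0 := by
        intro x hx
        rw [hφdef]
        simp only
        apply max_eq_left
        have : 1 ≤ infDist x G / r := (one_le_div hr).mpr hx
        linarith
      set κ : ℝ := ε/2 + 2*τ^j + τ^j/(1-τ) with hκdef
      have hτj0 : (0:ℝ) < τ^j := pow_pos hτ0 _
      have hτdiv : 0 < τ^j/(1-τ) := div_pos hτj0 h1τ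
      have hκpos : 0 < κ := by rw [hκdef]; linarith
      have hκε : κ ≤ ε := by
        have e1 : τ^j ≤ τ^j/(1-τ) := by
          rw [le_div_iff₀ h1τ]
          nlinarith
        have e2 : τ^j/(1-τ) ≤ ε/6 := by
          rw [div_le_iff₀ h1τ]
          nlinarith
        rw [hκdef]
        linarith
      have hφint : Integrable φ μ := by
        refine Integrable.mono' (integrable_const (1:ℝ)) hφcont.aestronglyMeasurable ?_
        filter_upwards with x
        rw [Real.norm_eq_abs, abs_of_nonneg (hφ0 x)]
        exact hφ1 x
      have hind : Integrable (G.indicator fun _ => (1:ℝ)) μ :=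
        (integrable_const 1).indicator hGmeas
      have hstep1 : (μ G).toReal ≤ ∫ x, φ x ∂μ := by
        have h1 : ∫ x, G.indicator (fun _ => (1:ℝ)) x ∂μ = (μ G).toReal := by
          rw [← measureReal_def]; exact MeasureTheory.integral_indicator_one (μ := μ) hGmeas
        rw [← h1]
        refine integral_mono hind hφint fun x => ?_
        by_cases hx : x ∈ G
        · rw [Set.indicator_of_mem hx, hφG x hx]
        · rw [Set.indicator_of_notMem hx]
          exact hφ0 x
      have hstep2 : ∫ x, φ x ∂μ = ∫ x in closedUnitCube n, φ x ∂μ := by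
        have hadd := MeasureTheory.integral_add_compl hQmeas hφint
        have hz : ∫ x in (closedUnitCube n)ᶜ, φ x ∂μ = 0 := by
          rw [Measure.restrict_eq_zero.mpr hμsupp]
          exact integral_zero_measure _
        linarith
      have hconv := hμlim φ hφcont.continuousOn
      set U : Set (Euc n) := {x | infDist x G < r} with hUdef
      have hUopen : IsOpen U := isOpen_lt (Metric.continuous_infDist_pt G) continuous_const
      have hUmeas : MeasurableSet U := hUopen.measurableSet
      set OK : Set (Fin n → Fin M) := {w | ∃ z ∈ good, (cub w ∩ cub z).Nonempty} with hOKdef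
      set W : Set (Euc n) := ⋃ w ∈ OK, cub w with hWdef
      have hWcompact : IsCompact W :=
        (Set.toFinite OK).isCompact_biUnion fun w _ => GAux.isCompact_gridCube hM _
      -- covering: Q₀ ∩ U ⊆ W
      have hQU : closedUnitCube n ∩ U ⊆ W := by
        rintro x ⟨hxQ, hxU⟩
        obtain ⟨w, hw⟩ := Set.mem_iUnion.mp (GAux.closedUnitCube_subset_cover hM hxQ)
        obtain ⟨y, hyG, hxy⟩ := (Metric.infDist_lt_iff hGne).mp hxU
        obtain ⟨z, hzgood, hyz⟩ : ∃ z, z ∈ good ∧ y ∈ cub z := by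
          obtain ⟨z, hz1, hz2⟩ := Set.mem_iUnion₂.mp hyG
          exact ⟨z, hz1, hz2⟩
        have hhalfM : 1/(2*(M:ℝ)) < 1/(M:ℝ) := by
          rw [div_lt_div_iff₀ (by positivity) hM']
          nlinarith
        have hcoord : ∀ a : Fin n, |x a - y a| < 1/(2*(M:ℝ)) := by
          intro a
          have h1 : |(x - y) a| ≤ ‖x - y‖ := MAux.coord_le_norm _ a
          have h3 : (x - y) a = x a - y a := by simp
          rw [h3] at h1
          have h2 : ‖x - y‖ = dist x y := (dist_eq_norm x y).symm
          rw [h2] at h1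
          calc |x a - y a| ≤ dist x y := h1
            _ < r := hxy
        have hadj : ∀ a : Fin n, ((z a : ℕ)) ≤ (w a : ℕ) + 1 ∧ (w a : ℕ) ≤ (z a : ℕ) + 1 := by
          intro a
          have hxw := hw a
          have hyzz := hyz a
          have labs : y a - x a ≤ |x a - y a| := by
            rw [abs_sub_comm]
            exact le_abs_self _
          have labs' : x a - y a ≤ |x a - y a| := le_abs_self _
          constructor
          · by_contra hcon
            push_neg at hcon
            have hcast : ((w a : ℕ) : ℝ) + 1 + 1 ≤ ((z a : ℕ) : ℝ) := by exact_mod_cast hcon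
            have l1 : x a ≤ (((w a : ℕ):ℝ)+1)/M := hxw.2
            have l2 : (((z a : ℕ)):ℝ)/M ≤ y a := hyzz.1
            have l3 : ((((w a : ℕ):ℝ)+1)+1)/M ≤ y a := le_trans (by gcongr) l2
            have l4 : (1:ℝ)/M ≤ y a - x a := by
              have expand : ((((w a : ℕ):ℝ)+1)+1)/M = (((w a : ℕ):ℝ)+1)/M + 1/M := by
                field_simp
              rw [expand] at l3
              linarith
            linarith [hcoord a]
          · by_contra hcon
            push_neg at hcon
            have hcast : ((z a : ℕ) : ℝ) + 1 + 1 ≤ ((w a : ℕ) : ℝ) := by exact_mod_cast hcon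
            have l1 : y a ≤ (((z a : ℕ):ℝ)+1)/M := hyzz.2
            have l2 : (((w a : ℕ)):ℝ)/M ≤ x a := hxw.1
            have l3 : ((((z a : ℕ):ℝ)+1)+1)/M ≤ x a := le_trans (by gcongr) l2
            have l4 : (1:ℝ)/M ≤ x a - y a := by
              have expand : ((((z a : ℕ):ℝ)+1)+1)/M = (((z a : ℕ):ℝ)+1)/M + 1/M := by
                field_simp
              rw [expand] at l3
              linarith
            linarith [hcoord a]
        refine Set.mem_biUnion (show w ∈ OK from ⟨z, hzgood, ?_⟩) hw
        set q : Euc n := (WithLp.equiv 2 (Fin n → ℝ)).symm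
          (fun a => ((max (w a : ℕ) (z a : ℕ) : ℕ) : ℝ)/M) with hqdef
        have hq : ∀ a, q a = ((max (w a : ℕ) (z a : ℕ) : ℕ) : ℝ)/M := fun a => rfl
        refine ⟨q, ?_, ?_⟩
        · intro a
          rw [hq a]
          constructor
          · gcongr
            exact_mod_cast le_max_left _ _
          · have hnat : max (w a : ℕ) (z a : ℕ) ≤ (w a : ℕ) + 1 :=
              max_le (Nat.le_succ _) (hadj a).1
            have : ((max (w a : ℕ) (z a : ℕ) : ℕ) : ℝ) ≤ ((w a : ℕ) : ℝ) + 1 := by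
              exact_mod_cast hnat
            gcongr
        · intro a
          rw [hq a]
          constructor
          · gcongr
            exact_mod_cast le_max_right _ _
          · have hnat : max (w a : ℕ) (z a : ℕ) ≤ (z a : ℕ) + 1 :=
              max_le (hadj a).2 (Nat.le_succ _)
            have : ((max (w a : ℕ) (z a : ℕ) : ℕ) : ℝ) ≤ ((z a : ℕ) : ℝ) + 1 := by
              exact_mod_cast hnat
            gcongr
      -- bound on OK cubes
      have hOKbound : ∀ w ∈ OK, ∀ l, j ≤ l →
          ∫ x in cub w, g l x ≤ κ * ((1:ℝ)/(M:ℝ))^n := by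
        rintro w ⟨z, hzgood, p, hpw, hpz⟩ l hl
        obtain ⟨x₀, hx₀cub, hx₀E⟩ := hzgood
        have hx0small : |g (j-1) x₀| ≤ ε/2 := hJ (j-1) hjJ x₀ hx₀E
        have hsup : ∀ x ∈ cub w, g (j-1) x ≤ ε/2 + 2*τ^j := by
          intro x hx
          have o1 := hosc' j hj1 (fun a => (z a : ℕ)) (fun a => (z a).2) x₀ hx₀cub p hpz
          have o2 := hosc' j hj1 (fun a => (w a : ℕ)) (fun a => (w a).2) p hpw x hx
          have a1 := (abs_le.mp o1).2
          have a2 := (abs_le.mp o2).2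
          have a3 := (abs_le.mp hx0small).2
          linarith
        have hconst : IntegrableOn (fun _ : Euc n => ε/2 + 2*τ^j) (cub w) volume := by
          refine integrableOn_const (hs := ?_)
          rw [GAux.volume_gridCube hM]
          exact (ENNReal.pow_lt_top ENNReal.ofReal_lt_top).ne
        have hbase : ∫ x in cub w, g (j-1) x ≤ (ε/2 + 2*τ^j) * ((1:ℝ)/(M:ℝ))^n := by
          have := setIntegral_mono_on
            (MAux.integrableOn_gridCube (hgc (j-1)) hM _) hconst
            (GAux.measurableSet_gridCube _ _) hsup
          rw [setIntegral_const] at this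
          rw [measureReal_def, MAux.volr_gridCube hM] at this
          calc ∫ x in cub w, g (j-1) x ≤ ((1:ℝ)/(M:ℝ))^n • (ε/2 + 2*τ^j) := this
            _ = (ε/2 + 2*τ^j) * ((1:ℝ)/(M:ℝ))^n := by rw [smul_eq_mul]; ring
        have htel := MAux.telescope τ ⟨hτ0, hτ1⟩ m g hgc hmpos hdiv hstep' hj1
          (fun a => (w a : ℕ)) (fun a => (w a).2) hl
        rw [MAux.volr_gridCube hM] at htel
        calc ∫ x in cub w, g l x
            ≤ (∫ x in cub w, g (j-1) x) + (τ ^ j / (1 - τ)) * ((1:ℝ)/(M:ℝ))^n := htel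
          _ ≤ (ε/2 + 2*τ^j) * ((1:ℝ)/(M:ℝ))^n + (τ ^ j / (1 - τ)) * ((1:ℝ)/(M:ℝ))^n := by
              linarith
          _ = κ * ((1:ℝ)/(M:ℝ))^n := by rw [hκdef]; ring
      -- the master bound for l ≥ j
      have hlbound : ∀ l, j ≤ l → ∫ x in closedUnitCube n, g l x * φ x ≤ κ := by
        intro l hl
        have hint1 : IntegrableOn (fun x => g l x * φ x) (closedUnitCube n) volume :=
          ContinuousOn.integrableOn_compact hQcompact ((hgc l).mul hφcont).continuousOn
        have hintg : IntegrableOn (g l) (closedUnitCube n) volume :=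
          ContinuousOn.integrableOn_compact hQcompact (hgc l).continuousOn
        have hintU : IntegrableOn (U.indicator (g l)) (closedUnitCube n) volume :=
          hintg.indicator hUmeas
        have h1 : ∫ x in closedUnitCube n, g l x * φ x
            ≤ ∫ x in closedUnitCube n, U.indicator (g l) x := by
          refine setIntegral_mono_on hint1 hintU hQmeas fun x hx => ?_
          by_cases hxU : x ∈ U
          · rw [Set.indicator_of_mem hxU]
            exact mul_le_of_le_one_right (hg0 l x) (hφ1 x)
          · rw [Set.indicator_of_notMem hxU]
            have : r ≤ infDist x G := not_lt.mp hxU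
            rw [hφout x this, mul_zero]
        have h2 : ∫ x in closedUnitCube n, U.indicator (g l) x
            = ∫ x in U ∩ closedUnitCube n, g l x := by
          rw [MeasureTheory.integral_indicator hUmeas, Measure.restrict_restrict hUmeas]
        have h3 : ∫ x in U ∩ closedUnitCube n, g l x ≤ ∫ x in W, g l x := by
          refine setIntegral_mono_set
            (ContinuousOn.integrableOn_compact hWcompact (hgc l).continuousOn)
            (Filter.Eventually.of_forall fun x => hg0 l x) ?_
          refine Filter.Eventually.of_forall ?_
          intro x hx
          exact hQU ⟨hx.2, hx.1⟩
        -- split W into cubes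
        set F : Finset (Fin n → Fin M) := (Set.toFinite OK).toFinset with hFdef
        set W' : Set (Euc n) := ⋃ w ∈ OK, GAux.hcube M (fun a => (w a : ℕ)) with hW'def
        have haeWW' : W =ᵐ[volume] W' := by
          rw [MeasureTheory.ae_eq_set]
          constructor
          · have hsub : W \ W' ⊆ ⋃ w ∈ OK, (cub w \ GAux.hcube M (fun a => (w a : ℕ))) := by
              rintro x ⟨hxW, hxW'⟩
              obtain ⟨w, hwOK, hxw⟩ := Set.mem_iUnion₂.mp hxW
              refine Set.mem_iUnion₂.mpr ⟨w, hwOK, hxw, fun hcon => hxW' ?_⟩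
              exact Set.mem_iUnion₂.mpr ⟨w, hwOK, hcon⟩
            refine measure_mono_null hsub ?_
            refine measure_biUnion_null_iff (Set.to_countable OK) |>.mpr fun w _ => ?_
            exact (MeasureTheory.ae_eq_set.mp (GAux.gridCube_ae_hcube M _)).1
          · have : W' \ W = ∅ := by
              rw [Set.diff_eq_empty]
              refine Set.iUnion₂_subset fun w hw => ?_
              intro x hx
              exact Set.mem_biUnion hw (GAux.hcube_subset_gridCube _ _ hx)
            rw [this]
            simp
        have hW'F : W' = ⋃ w ∈ F, GAux.hcube M (fun a => (w a : ℕ)) := by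
          rw [hW'def]
          ext x
          simp only [Set.mem_iUnion, exists_prop]
          exact ⟨fun ⟨w, hw, hx⟩ => ⟨w, (Set.Finite.mem_toFinset _).mpr hw, hx⟩,
            fun ⟨w, hw, hx⟩ => ⟨w, (Set.Finite.mem_toFinset _).mp hw, hx⟩⟩
        have hsplit : ∫ x in W', g l x
            = ∑ w ∈ F, ∫ x in GAux.hcube M (fun a => (w a : ℕ)), g l x := by
          rw [hW'F]
          refine MeasureTheory.integral_biUnion_finset F
            (fun w _ => GAux.measurableSet_hcube _ _) ?_
            (fun w _ => MAux.integrableOn_hcube (hgc l) hM _)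
          intro w hwF w' hw'F hne
          refine GAux.hcube_disjoint hM fun hcon => hne ?_
          funext a
          have := congrFun hcon a
          exact Fin.ext (by exact_mod_cast this)
        have h4 : ∫ x in W, g l x = ∑ w ∈ F, ∫ x in GAux.hcube M (fun a => (w a : ℕ)), g l x := by
          rw [setIntegral_congr_set haeWW', hsplit]
        have h5 : ∀ w ∈ F, ∫ x in GAux.hcube M (fun a => (w a : ℕ)), g l x
            ≤ κ * ((1:ℝ)/(M:ℝ))^n := by
          intro w hwF
          have hwOK : w ∈ OK := (Set.Finite.mem_toFinset _).mp hwF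
          calc ∫ x in GAux.hcube M (fun a => (w a : ℕ)), g l x
              = ∫ x in cub w, g l x :=
                (setIntegral_congr_set (GAux.gridCube_ae_hcube M _)).symm
            _ ≤ κ * ((1:ℝ)/(M:ℝ))^n := hOKbound w hwOK l hl
        have h6 : ∑ w ∈ F, ∫ x in GAux.hcube M (fun a => (w a : ℕ)), g l x ≤ κ := by
          have hcardle : (F.card : ℝ) ≤ ((M:ℝ))^n := by
            have h7 : F.card ≤ Fintype.card (Fin n → Fin M) := Finset.card_le_univ F
            have h8 : Fintype.card (Fin n → Fin M) = M ^ n := by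
              rw [Fintype.card_fun]
              simp
            calc (F.card : ℝ) ≤ (Fintype.card (Fin n → Fin M) : ℝ) := by exact_mod_cast h7
              _ = ((M:ℝ))^n := by rw [h8]; push_cast; ring
          have hnn : 0 ≤ κ * ((1:ℝ)/(M:ℝ))^n := by positivity
          calc ∑ w ∈ F, ∫ x in GAux.hcube M (fun a => (w a : ℕ)), g l x
              ≤ ∑ _w ∈ F, κ * ((1:ℝ)/(M:ℝ))^n := Finset.sum_le_sum h5
            _ = (F.card : ℝ) * (κ * ((1:ℝ)/(M:ℝ))^n) := by
                rw [Finset.sum_const, nsmul_eq_mul]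
            _ ≤ ((M:ℝ))^n * (κ * ((1:ℝ)/(M:ℝ))^n) := by
                exact mul_le_mul_of_nonneg_right hcardle hnn
            _ = κ * (((M:ℝ)) * ((1:ℝ)/(M:ℝ)))^n := by rw [mul_pow]; ring
            _ = κ := by
                rw [mul_one_div_cancel (ne_of_gt hM')]
                simp
        calc ∫ x in closedUnitCube n, g l x * φ x
            ≤ ∫ x in closedUnitCube n, U.indicator (g l) x := h1
          _ = ∫ x in U ∩ closedUnitCube n, g l x := h2
          _ ≤ ∫ x in W, g l x := h3
          _ = ∑ w ∈ F, ∫ x in GAux.hcube M (fun a => (w a : ℕ)), g l x := h4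
          _ ≤ κ := h6
      have hfinal : ∫ x in closedUnitCube n, φ x ∂μ ≤ κ :=
        le_of_tendsto hconv (Filter.eventually_atTop.mpr ⟨j, hlbound⟩)
      have hGle : (μ G).toReal ≤ ε := by
        have := hstep1
        rw [hstep2] at this
        linarith
      calc μ G = ENNReal.ofReal (μ G).toReal :=
            (ENNReal.ofReal_toReal (measure_ne_top μ G)).symm
        _ ≤ ENNReal.ofReal ε := ENNReal.ofReal_le_ofReal hGle
    · -- volume of the complement is small
      rw [Measure.restrict_apply hGmeas.compl]
      refine le_trans (measure_mono ?_) htvol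
      rintro x ⟨hxG, hxQ⟩
      by_contra hxt
      have hxE : x ∈ E := ⟨hxQ, hxt⟩
      obtain ⟨z, hz⟩ := Set.mem_iUnion.mp (GAux.closedUnitCube_subset_cover hM hxQ)
      exact hxG (Set.mem_biUnion (show z ∈ good from ⟨x, hz, hxE⟩) hz)
  -- ================= assembling the singular set =================
  choose A hAmeas hAμ hAν using fun i : ℕ => key ((1/2:ℝ)^i) (by positivity)
  have hhalf : ∀ i : ℕ, ENNReal.ofReal ((1/2:ℝ)^i) ≤ (2⁻¹ : ℝ≥0∞)^i := by
    intro i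
    rw [ENNReal.ofReal_pow (by norm_num)]
    have : ENNReal.ofReal ((1:ℝ)/2) = (2⁻¹ : ℝ≥0∞) := by
      rw [one_div, ENNReal.ofReal_inv_of_pos (by norm_num : (0:ℝ) < 2)]
      norm_num
    rw [this]
  have hpowlim : Tendsto (fun i : ℕ => (2⁻¹ : ℝ≥0∞)^i) atTop (𝓝 0) :=
    ENNReal.tendsto_pow_atTop_nhds_zero_of_lt_one (by
      rw [ENNReal.inv_lt_one]
      exact ENNReal.one_lt_two)
  set sing : Set (Euc n) := ⋂ N : ℕ, ⋃ i : ℕ, ⋃ (_ : N ≤ i), A i with hsingdef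
  have hsingmeas : MeasurableSet sing :=
    MeasurableSet.iInter fun N => MeasurableSet.iUnion fun i =>
      MeasurableSet.iUnion fun _ => hAmeas i
  refine ⟨sing, hsingmeas, ?_, ?_⟩
  · -- μ sing = 0
    have hbound : ∀ N : ℕ, μ sing ≤ (2⁻¹:ℝ≥0∞)^N * 2 := by
      intro N
      have h1 : sing ⊆ ⋃ i, A (N + i) := by
        intro x hx
        have hx' := Set.mem_iInter.mp hx N
        obtain ⟨i, hNi, hxi⟩ : ∃ i, N ≤ i ∧ x ∈ A i := by
          simpa using hx'
        exact Set.mem_iUnion.mpr ⟨i - N, by rwa [Nat.add_sub_cancel' hNi]⟩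
      calc μ sing ≤ μ (⋃ i, A (N+i)) := measure_mono h1
        _ ≤ ∑' i, μ (A (N+i)) := measure_iUnion_le _
        _ ≤ ∑' i : ℕ, (2⁻¹:ℝ≥0∞)^(N+i) :=
            ENNReal.tsum_le_tsum fun i => (hAμ _).trans (hhalf _)
        _ = (2⁻¹:ℝ≥0∞)^N * ∑' i : ℕ, (2⁻¹:ℝ≥0∞)^i := by
            rw [← ENNReal.tsum_mul_left]
            congr 1
            funext i
            rw [pow_add]
        _ ≤ (2⁻¹:ℝ≥0∞)^N * 2 := by
            rw [ENNReal.tsum_geometric]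
            gcongr
            rw [ENNReal.one_sub_inv_two, inv_inv]
    have hlim : Tendsto (fun N : ℕ => (2⁻¹:ℝ≥0∞)^N * 2) atTop (𝓝 0) := by
      have := ENNReal.Tendsto.mul_const hpowlim (Or.inr (ENNReal.ofNat_ne_top (n := 2)))
      simpa using this
    exact le_antisymm (ge_of_tendsto hlim (Filter.Eventually.of_forall hbound)) zero_le
  · -- volume of the complement
    rw [hsingdef, Set.compl_iInter]
    refine measure_iUnion_null fun N => ?_
    have hb : ∀ i, N ≤ i →
        (volume.restrict (closedUnitCube n)) (⋃ i, ⋃ (_ : N ≤ i), A i)ᶜ ≤ (2⁻¹:ℝ≥0∞)^i := by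
      intro i hNi
      refine le_trans (measure_mono ?_) ((hAν i).trans (hhalf i))
      intro x hx
      simp only [Set.mem_compl_iff, Set.mem_iUnion, not_exists] at hx
      exact hx i hNi
    exact le_antisymm
      (ge_of_tendsto hpowlim (Filter.eventually_atTop.mpr ⟨N, hb⟩)) zero_le
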